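/- arXiv:1605.08364 — 4 statements merged into one kernel-verified Lean document; each statement's English description precedes it below -/
import Mathlib

section
/- For integers 1 ≤ i < k ≤ N, the probability that the maturity time T(i) of a candidate with relative rank 2 at time i equals k is 2(i-1)i/((k-2)(k-1)k), i.e. the probability that in a uniformly random permutation of {1,...,N}, given Y_i = 2, the relative ranks satisfy Y_{i+1}>2, ..., Y_{k-1}>2 and Y_k ∈ {1,2}, equals 2(i-1)i/((k-2)(k-1)k). -/
/-- Relative rank of the observation at (0-based) time `t`: the number of
indices `j ≤ t` with `σ j ≤ σ t`. -/
def relRank (N : ℕ) (σ : Equiv.Perm (Fin N)) (t : Fin N) : ℕ :=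
  (Finset.univ.filter (fun j : Fin N => j ≤ t ∧ σ j ≤ σ t)).card

namespace DurationAux

open Finset

lemma relRank_eq (N : ℕ) (σ : Equiv.Perm (Fin N)) (t : Fin N) :
    relRank N σ t = (univ.filter (fun j : Fin N => j < t ∧ σ j < σ t)).card + 1 := by
  unfold relRank
  have : (univ.filter (fun j : Fin N => j ≤ t ∧ σ j ≤ σ t))
      = insert t (univ.filter (fun j : Fin N => j < t ∧ σ j < σ t)) := by
    ext j
    simp only [mem_filter, mem_univ, true_and, mem_insert]
    constructor
    · rintro ⟨h1, h2⟩
      rcases eq_or_ne j t with rfl | hne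
      · exact Or.inl rfl
      · exact Or.inr ⟨lt_of_le_of_ne h1 hne,
          lt_of_le_of_ne h2 (fun hc => hne (σ.injective (Fin.ext (by exact congrArg Fin.val hc))))⟩
    · rintro (rfl | ⟨h1, h2⟩)
      · exact ⟨le_rfl, le_rfl⟩
      · exact ⟨h1.le, h2.le⟩
  rw [this, card_insert_of_notMem (by simp)]

lemma relRank_pos (N : ℕ) (σ : Equiv.Perm (Fin N)) (t : Fin N) : 1 ≤ relRank N σ t := by
  rw [relRank_eq]; omega

lemma relRank_le (N : ℕ) (σ : Equiv.Perm (Fin N)) (t : Fin N) : relRank N σ t ≤ t.val + 1 := by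
  unfold relRank
  calc (univ.filter (fun j : Fin N => j ≤ t ∧ σ j ≤ σ t)).card
      ≤ (univ.filter (fun j : Fin N => j ≤ t)).card := by
        apply card_le_card; intro j; simp only [mem_filter]; tauto
    _ = t.val + 1 := by
        rw [show (univ.filter (fun j : Fin N => j ≤ t)) = Finset.Iic t by ext j; simp]
        simp [Fin.card_Iic]

/-- the code: relRank - 1 at each position -/
def code (N : ℕ) (σ : Equiv.Perm (Fin N)) : ∀ t : Fin N, Fin (t.val + 1) :=
  fun t => ⟨relRank N σ t - 1, by have h1 := relRank_pos N σ t; have h2 := relRank_le N σ t; omega⟩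

lemma key (N : ℕ) (σ : Equiv.Perm (Fin N)) (t j1 : Fin N) (hj : j1 < t) :
    (σ j1 < σ t ↔
      (univ.filter (fun j' : Fin N => j' < t ∧ σ j' ≤ σ j1)).card < relRank N σ t) := by
  rw [relRank_eq]
  constructor
  · intro h
    have hsub : (univ.filter (fun j' : Fin N => j' < t ∧ σ j' ≤ σ j1))
        ⊆ (univ.filter (fun j' : Fin N => j' < t ∧ σ j' < σ t)) := by
      intro j' hj'
      simp only [mem_filter, mem_univ, true_and] at *
      exact ⟨hj'.1, lt_of_le_of_lt hj'.2 h⟩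
    have := card_le_card hsub
    omega
  · intro h
    by_contra hc
    push_neg at hc
    have hne : σ t ≠ σ j1 := fun he => absurd (σ.injective he) (by intro he'; subst he'; exact lt_irrefl _ hj)
    have hlt : σ t < σ j1 := lt_of_le_of_ne hc hne
    have hsub : insert j1 (univ.filter (fun j' : Fin N => j' < t ∧ σ j' < σ t))
        ⊆ (univ.filter (fun j' : Fin N => j' < t ∧ σ j' ≤ σ j1)) := by
      intro j' hj'
      simp only [mem_insert, mem_filter, mem_univ, true_and] at *
      rcases hj' with rfl | ⟨h1, h2⟩
      · exact ⟨hj, le_rfl⟩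
      · exact ⟨h1, (h2.trans hlt).le⟩
    have hnm : j1 ∉ (univ.filter (fun j' : Fin N => j' < t ∧ σ j' < σ t)) := by
      simp only [mem_filter, mem_univ, true_and, not_and]
      intro _; exact not_lt.mpr hlt.le
    have := card_le_card hsub
    rw [card_insert_of_notMem hnm] at this
    omega

lemma le_iff_perm (N : ℕ) (σ : Equiv.Perm (Fin N)) (a b : Fin N) :
    σ a ≤ σ b ↔ a = b ∨ σ a < σ b := by
  rcases eq_or_ne a b with rfl | hne
  · simp
  · simp only [hne, false_or]
    constructor
    · intro h
      exact lt_of_le_of_ne h (fun he => hne (σ.injective he))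
    · exact le_of_lt

lemma ord (N : ℕ) (σ τ : Equiv.Perm (Fin N)) (h : ∀ t, relRank N σ t = relRank N τ t) :
    ∀ v : ℕ, ∀ j1 j2 : Fin N, j1.val ≤ v → j2.val ≤ v → (σ j1 < σ j2 ↔ τ j1 < τ j2) := by
  intro v
  induction v using Nat.strong_induction_on with
  | _ v IH =>
    have main : ∀ j1 j2 : Fin N, j1.val ≤ v → j2.val ≤ v → j1 < j2 →
        (σ j1 < σ j2 ↔ τ j1 < τ j2) := by
      intro j1 j2 h1 h2 hlt
      have hw : j2.val - 1 < v := by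
        have : j1.val < j2.val := hlt
        omega
      have hfeq : (univ.filter (fun j' : Fin N => j' < j2 ∧ σ j' ≤ σ j1))
          = (univ.filter (fun j' : Fin N => j' < j2 ∧ τ j' ≤ τ j1)) := by
        apply filter_congr
        intro j' _
        have hiff : ∀ (hj' : j' < j2), (σ j' ≤ σ j1 ↔ τ j' ≤ τ j1) := by
          intro hj'
          have hj'v : j'.val ≤ j2.val - 1 := by
            have : j'.val < j2.val := hj'
            omega
          have hj1v : j1.val ≤ j2.val - 1 := by
            have : j1.val < j2.val := hlt
            omega
          rw [le_iff_perm, le_iff_perm, IH _ hw j' j1 hj'v hj1v]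
        constructor
        · rintro ⟨ha, hb⟩; exact ⟨ha, (hiff ha).mp hb⟩
        · rintro ⟨ha, hb⟩; exact ⟨ha, (hiff ha).mpr hb⟩
      rw [key N σ j2 j1 hlt, key N τ j2 j1 hlt, hfeq, h j2]
    intro j1 j2 h1 h2
    rcases lt_trichotomy j1 j2 with hlt | rfl | hgt
    · exact main j1 j2 h1 h2 hlt
    · simp
    · have hne : j2 ≠ j1 := ne_of_lt hgt
      have base := main j2 j1 h2 h1 hgt
      constructor
      · intro hs
        by_contra ht
        have : τ j2 ≤ τ j1 := le_of_not_gt ht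
        rcases (le_iff_perm N τ j2 j1).mp this with he | hl
        · exact hne he
        · have := base.mpr hl
          exact absurd hs (not_lt.mpr this.le)
      · intro ht
        by_contra hs
        have : σ j2 ≤ σ j1 := le_of_not_gt hs
        rcases (le_iff_perm N σ j2 j1).mp this with he | hl
        · exact hne he
        · have := base.mp hl
          exact absurd ht (not_lt.mpr this.le)

lemma perm_eq (N : ℕ) (σ τ : Equiv.Perm (Fin N)) (h : ∀ t, relRank N σ t = relRank N τ t) :
    σ = τ := by
  have hord : ∀ j1 j2 : Fin N, σ j1 < σ j2 ↔ τ j1 < τ j2 := by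
    intro j1 j2
    exact ord N σ τ h N j1 j2 j1.isLt.le j2.isLt.le
  have hmono : StrictMono (fun a => σ (τ.symm a)) := by
    intro a b hab
    rw [hord]
    simpa using hab
  have hmono2 : StrictMono (fun a => τ (σ.symm a)) := by
    intro a b hab
    rw [← hord]
    simpa using hab
  have hid : ∀ a : Fin N, σ (τ.symm a) = a := by
    intro a
    haveI : WellFoundedLT (Fin N) := inferInstance
    have h1 : a ≤ σ (τ.symm a) := hmono.le_apply
    have h2 : σ (τ.symm a) ≤ τ (σ.symm (σ (τ.symm a))) := hmono2.le_apply
    rw [Equiv.symm_apply_apply] at h2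
    simp only [Equiv.apply_symm_apply] at h2
    exact le_antisymm h2 h1
  ext j
  have := hid (τ j)
  rw [Equiv.symm_apply_apply] at this
  rw [this]

lemma code_inj (N : ℕ) : Function.Injective (code N) := by
  intro σ τ hc
  apply perm_eq
  intro t
  have := congrFun hc t
  have hv : relRank N σ t - 1 = relRank N τ t - 1 := congrArg Fin.val this
  have h1 := relRank_pos N σ t
  have h2 := relRank_pos N τ t
  omega

lemma code_bij (N : ℕ) : Function.Bijective (code N) := by
  rw [Fintype.bijective_iff_injective_and_card]
  refine ⟨code_inj N, ?_⟩
  rw [Fintype.card_perm, Fintype.card_fin, Fintype.card_pi]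
  simp only [Fintype.card_fin]
  rw [Fin.prod_univ_eq_prod_range (fun t => t + 1) N]
  exact (Finset.prod_range_add_one_eq_factorial N).symm

lemma card_code (N : ℕ) (S : ∀ t : Fin N, Finset (Fin (t.val + 1)))
    (P : Equiv.Perm (Fin N) → Prop) [DecidablePred P]
    (hP : ∀ σ, P σ ↔ ∀ t, code N σ t ∈ S t) :
    (univ.filter P).card = ∏ t, (S t).card := by
  rw [← Fintype.card_piFinset]
  apply card_bij (fun σ _ => code N σ)
  · intro σ hσ
    rw [mem_filter] at hσ
    rw [Fintype.mem_piFinset]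
    exact (hP σ).mp hσ.2
  · intro a _ b _ hab
    exact code_inj N hab
  · intro a ha
    obtain ⟨σ, hσ⟩ := (code_bij N).2 a
    refine ⟨σ, ?_, hσ⟩
    rw [mem_filter]
    refine ⟨mem_univ _, (hP σ).mpr ?_⟩
    rw [hσ]
    exact Fintype.mem_piFinset.mp ha

def Ffun (i k t : ℕ) : ℕ :=
  if t = i - 1 then 1 else if i ≤ t ∧ t + 1 < k then t - 1 else if t = k - 1 then 2 else t + 1

def Gfun (i t : ℕ) : ℕ :=
  if t = i - 1 then 1 else t + 1

def numPred (i k t r : ℕ) : Prop :=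
  (t = i - 1 → r = 1) ∧ (i ≤ t → t + 1 < k → 2 ≤ r) ∧ (t = k - 1 → r ≤ 1)

def denPred (i t r : ℕ) : Prop := t = i - 1 → r = 1

instance (i k t r : ℕ) : Decidable (numPred i k t r) := by unfold numPred; infer_instance
instance (i t r : ℕ) : Decidable (denPred i t r) := by unfold denPred; infer_instance

lemma card_filter_fin (n : ℕ) (p : ℕ → Prop) [DecidablePred p] :
    (univ.filter (fun r : Fin n => p r.val)).card = ((range n).filter p).card := by
  rw [Finset.card_filter, Finset.card_filter,
    Fin.sum_univ_eq_sum_range (fun j => if p j then 1 else 0) n]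

lemma card_num (i k : ℕ) (hi : 2 ≤ i) (hik : i < k) (t : ℕ) :
    ((range (t+1)).filter (numPred i k t)).card = Ffun i k t := by
  rcases eq_or_ne t (i-1) with rfl | h1
  · have : ∀ r ∈ range (i-1+1), numPred i k (i-1) r ↔ r = 1 := by
      intro r _
      unfold numPred
      constructor
      · intro ⟨a, _, _⟩; exact a rfl
      · intro hr; refine ⟨fun _ => hr, fun h _ => by omega, fun h => by omega⟩
    rw [filter_congr this, Finset.filter_eq']
    have : 1 ∈ range (i-1+1) := by rw [mem_range]; omega
    rw [if_pos this]
    simp [Ffun]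
  · rcases em (i ≤ t ∧ t + 1 < k) with h2 | h2
    · have : ∀ r ∈ range (t+1), numPred i k t r ↔ 2 ≤ r := by
        intro r _
        unfold numPred
        constructor
        · intro ⟨_, b, _⟩; exact b h2.1 h2.2
        · intro hr; exact ⟨fun h => absurd h h1, fun _ _ => hr, fun h => by omega⟩
      rw [filter_congr this]
      have : (range (t+1)).filter (fun r => 2 ≤ r) = Ico 2 (t+1) := by
        ext x; simp only [mem_filter, mem_range, mem_Ico]; omega
      rw [this, Nat.card_Ico]
      simp only [Ffun, if_neg h1, if_pos h2]
      omega
    · rcases eq_or_ne t (k-1) with rfl | h3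
      · have : ∀ r ∈ range (k-1+1), numPred i k (k-1) r ↔ r ≤ 1 := by
          intro r _
          unfold numPred
          constructor
          · intro ⟨_, _, c⟩; exact c rfl
          · intro hr
            refine ⟨fun h => absurd h h1, fun ha hb => by omega, fun _ => hr⟩
        rw [filter_congr this]
        have : (range (k-1+1)).filter (fun r => r ≤ 1) = {0, 1} := by
          ext x; simp only [mem_filter, mem_range, mem_insert, mem_singleton]; omega
        rw [this]
        have h4 : Ffun i k (k-1) = 2 := by simp [Ffun, h1, h2]
        rw [h4]
        rfl
      · have : ∀ r ∈ range (t+1), numPred i k t r ↔ True := by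
          intro r _
          unfold numPred
          simp only [iff_true]
          exact ⟨fun h => absurd h h1, fun ha hb => absurd ⟨ha, hb⟩ h2, fun h => absurd h h3⟩
        rw [filter_congr this, Finset.filter_true_of_mem (fun x _ => trivial), card_range]
        simp [Ffun, h1, h2, h3]

lemma card_den (i : ℕ) (hi : 2 ≤ i) (t : ℕ) :
    ((range (t+1)).filter (denPred i t)).card = Gfun i t := by
  rcases eq_or_ne t (i-1) with rfl | h1
  · have : ∀ r ∈ range (i-1+1), denPred i (i-1) r ↔ r = 1 := by
      intro r _
      unfold denPred
      exact ⟨fun a => a rfl, fun hr _ => hr⟩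
    rw [filter_congr this, Finset.filter_eq']
    have : 1 ∈ range (i-1+1) := by rw [mem_range]; omega
    rw [if_pos this]
    simp [Gfun]
  · have : ∀ r ∈ range (t+1), denPred i t r ↔ True := by
      intro r _
      unfold denPred
      simp only [iff_true]
      exact fun h => absurd h h1
    rw [filter_congr this, Finset.filter_true_of_mem (fun x _ => trivial), card_range]
    simp [Gfun, h1]

lemma prod_tele (i : ℕ) (hi : 2 ≤ i) : ∀ K, i ≤ K →
    (∏ t ∈ Ico i K, (t - 1)) * ((K - 1) * K) = (∏ t ∈ Ico i K, (t + 1)) * ((i - 1) * i) := by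
  intro K hK
  induction K, hK using Nat.le_induction with
  | base => simp
  | succ K hK IH =>
    rw [Finset.prod_Ico_succ_top hK, Finset.prod_Ico_succ_top hK]
    have IH' := IH
    obtain ⟨a, rfl⟩ : ∃ a, K = a + 1 := ⟨K - 1, by omega⟩
    simp only [Nat.add_sub_cancel] at *
    set P1 := ∏ t ∈ Ico i (a+1), (t - 1) with hP1
    set P2 := ∏ t ∈ Ico i (a+1), (t + 1) with hP2
    calc P1 * a * ((a + 1) * (a + 1 + 1))
        = (P1 * (a * (a + 1))) * (a + 1 + 1) := by ring
      _ = (P2 * ((i - 1) * i)) * (a + 1 + 1) := by rw [IH']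
      _ = P2 * (a + 1 + 1) * ((i - 1) * i) := by ring

lemma prod_main (N i k : ℕ) (hi : 2 ≤ i) (hik : i < k) (hk : k ≤ N) :
    (∏ t ∈ range N, Ffun i k t) * ((k - 2) * (k - 1) * k)
      = (∏ t ∈ range N, Gfun i t) * (2 * (i - 1) * i) := by
  have hsplitF : ∀ (H : ℕ → ℕ), (∏ t ∈ range N, H t) =
      (∏ t ∈ Ico 0 (i-1), H t) * H (i-1) * (∏ t ∈ Ico i (k-1), H t) * H (k-1)
        * (∏ t ∈ Ico k N, H t) := by
    intro H
    rw [range_eq_Ico]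
    rw [← Finset.prod_Ico_consecutive H (Nat.zero_le k) hk]
    rw [← Finset.prod_Ico_consecutive H (Nat.zero_le (i-1)) (by omega : i - 1 ≤ k)]
    rw [show Ico (i-1) k = Ico (i-1) i ∪ Ico i k by rw [Finset.Ico_union_Ico_eq_Ico (by omega) (by omega)]]
    rw [Finset.prod_union (by apply Finset.Ico_disjoint_Ico_consecutive)]
    rw [show Ico (i-1) i = {i-1} by ext x; simp only [mem_Ico, mem_singleton]; omega]
    rw [show Ico i k = Ico i (k-1) ∪ Ico (k-1) k by rw [Finset.Ico_union_Ico_eq_Ico (by omega) (by omega)]]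
    rw [Finset.prod_union (by apply Finset.Ico_disjoint_Ico_consecutive)]
    rw [show Ico (k-1) k = {k-1} by ext x; simp only [mem_Ico, mem_singleton]; omega]
    simp [mul_assoc]
  rw [hsplitF (Ffun i k), hsplitF (Gfun i)]
  have e1 : ∀ t ∈ Ico 0 (i-1), Ffun i k t = Gfun i t := by
    intro t ht
    simp only [mem_Ico] at ht
    simp only [Ffun, Gfun]
    have h1 : ¬ (t = i - 1) := by omega
    have h2 : ¬ (i ≤ t ∧ t + 1 < k) := by omega
    have h3 : ¬ (t = k - 1) := by omega
    simp [h1, h2, h3]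
  have e2 : Ffun i k (i-1) = 1 := by simp [Ffun]
  have e2' : Gfun i (i-1) = 1 := by simp [Gfun]
  have e3 : ∀ t ∈ Ico i (k-1), Ffun i k t = t - 1 := by
    intro t ht
    simp only [mem_Ico] at ht
    simp only [Ffun]
    have h1 : ¬ (t = i - 1) := by omega
    have h2 : (i ≤ t ∧ t + 1 < k) := by omega
    simp [h1, h2]
  have e3' : ∀ t ∈ Ico i (k-1), Gfun i t = t + 1 := by
    intro t ht
    simp only [mem_Ico] at ht
    simp only [Gfun]
    have h1 : ¬ (t = i - 1) := by omega
    simp [h1]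
  have e4 : Ffun i k (k-1) = 2 := by
    simp only [Ffun]
    have h1 : ¬ (k - 1 = i - 1) := by omega
    have h2 : ¬ (i ≤ k - 1 ∧ k - 1 + 1 < k) := by omega
    simp [h1, h2]
  have e4' : Gfun i (k-1) = k - 1 + 1 := by
    simp only [Gfun]
    have h1 : ¬ (k - 1 = i - 1) := by omega
    simp [h1]
  have e5 : ∀ t ∈ Ico k N, Ffun i k t = Gfun i t := by
    intro t ht
    simp only [mem_Ico] at ht
    simp only [Ffun, Gfun]
    have h1 : ¬ (t = i - 1) := by omega
    have h2 : ¬ (i ≤ t ∧ t + 1 < k) := by omega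
    have h3 : ¬ (t = k - 1) := by omega
    simp [h1, h2, h3]
  rw [Finset.prod_congr rfl e1, Finset.prod_congr rfl e3, Finset.prod_congr rfl e3',
    Finset.prod_congr rfl e5, e2, e2', e4, e4']
  set C1 := ∏ t ∈ Ico 0 (i-1), Gfun i t
  set C2 := ∏ t ∈ Ico k N, Gfun i t
  set P1 := ∏ t ∈ Ico i (k-1), (t - 1)
  set P2 := ∏ t ∈ Ico i (k-1), (t + 1)
  have htele := prod_tele i hi (k-1) (by omega)
  have hr : k - 1 - 1 = k - 2 := by omega
  rw [hr] at htele
  have hk1 : k - 1 + 1 = k := by omega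
  rw [hk1]
  calc C1 * 1 * P1 * 2 * C2 * ((k-2) * (k-1) * k)
      = (P1 * ((k-2) * (k-1))) * (C1 * 2 * C2 * k) := by ring
    _ = (P2 * ((i-1) * i)) * (C1 * 2 * C2 * k) := by rw [htele]
    _ = C1 * 1 * P2 * k * C2 * (2 * (i-1) * i) := by ring

end DurationAux

/-- For `1 ≤ i < k ≤ N`, in a uniformly random permutation, the
conditional probability, given `Y_i = 2`, that `Y_m > 2` for all `i < m < k`
and `Y_k ∈ {1,2}` equals `2(i-1)i/((k-2)(k-1)k)`. -/
theorem duration_rank_two_maturity (N i k : ℕ) (hi : 1 ≤ i) (hik : i < k) (hk : k ≤ N) :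
    ((Finset.univ.filter (fun σ : Equiv.Perm (Fin N) =>
        relRank N σ ⟨i - 1, by omega⟩ = 2 ∧
        (∀ m : Fin N, i ≤ (m : ℕ) → (m : ℕ) + 1 < k → 2 < relRank N σ m) ∧
        (relRank N σ ⟨k - 1, by omega⟩ = 1 ∨ relRank N σ ⟨k - 1, by omega⟩ = 2))).card : ℝ) /
      ((Finset.univ.filter (fun σ : Equiv.Perm (Fin N) =>
        relRank N σ ⟨i - 1, by omega⟩ = 2)).card : ℝ)
    = 2 * ((i : ℝ) - 1) * i / (((k : ℝ) - 2) * ((k : ℝ) - 1) * k) := by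
  classical
  rcases eq_or_lt_of_le hi with heq | hi2
  · -- i = 1 : both sides are 0
    have h0 : ∀ σ : Equiv.Perm (Fin N), relRank N σ ⟨i - 1, by omega⟩ = 1 := by
      intro σ
      rw [DurationAux.relRank_eq]
      have : (Finset.univ.filter (fun j : Fin N => j < (⟨i - 1, by omega⟩ : Fin N) ∧
          σ j < σ ⟨i - 1, by omega⟩)) = ∅ := by
        rw [Finset.eq_empty_iff_forall_notMem]
        intro j hj
        rw [Finset.mem_filter] at hj
        have : j.val < i - 1 := hj.2.1
        omega
      rw [this]
      rfl
    have hnum0 : (Finset.univ.filter (fun σ : Equiv.Perm (Fin N) =>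
        relRank N σ ⟨i - 1, by omega⟩ = 2 ∧
        (∀ m : Fin N, i ≤ (m : ℕ) → (m : ℕ) + 1 < k → 2 < relRank N σ m) ∧
        (relRank N σ ⟨k - 1, by omega⟩ = 1 ∨ relRank N σ ⟨k - 1, by omega⟩ = 2))).card = 0 := by
      rw [Finset.card_eq_zero, Finset.eq_empty_iff_forall_notMem]
      intro σ hσ
      rw [Finset.mem_filter] at hσ
      have := hσ.2.1
      rw [h0 σ] at this
      omega
    rw [hnum0]
    have hiR : (i : ℝ) = 1 := by exact_mod_cast congrArg (Nat.cast : ℕ → ℝ) heq.symm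
    rw [hiR]
    norm_num
  · -- 2 ≤ i
    have hi2' : 2 ≤ i := hi2
    have hk3 : 3 ≤ k := by omega
    set Snum : ∀ t : Fin N, Finset (Fin (t.val + 1)) :=
      fun t => Finset.univ.filter (fun r => DurationAux.numPred i k t.val r.val) with hSnum
    set Sden : ∀ t : Fin N, Finset (Fin (t.val + 1)) :=
      fun t => Finset.univ.filter (fun r => DurationAux.denPred i t.val r.val) with hSden
    have hmemN : ∀ (σ : Equiv.Perm (Fin N)) (t : Fin N),
        (DurationAux.code N σ t ∈ Snum t) ↔
          DurationAux.numPred i k t.val (relRank N σ t - 1) := by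
      intro σ t
      simp [hSnum, DurationAux.code, Finset.mem_filter]
    have hmemD : ∀ (σ : Equiv.Perm (Fin N)) (t : Fin N),
        (DurationAux.code N σ t ∈ Sden t) ↔
          DurationAux.denPred i t.val (relRank N σ t - 1) := by
      intro σ t
      simp [hSden, DurationAux.code, Finset.mem_filter]
    have hPnum : ∀ σ : Equiv.Perm (Fin N),
        (relRank N σ ⟨i - 1, by omega⟩ = 2 ∧
        (∀ m : Fin N, i ≤ (m : ℕ) → (m : ℕ) + 1 < k → 2 < relRank N σ m) ∧
        (relRank N σ ⟨k - 1, by omega⟩ = 1 ∨ relRank N σ ⟨k - 1, by omega⟩ = 2))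
          ↔ ∀ t, DurationAux.code N σ t ∈ Snum t := by
      intro σ
      constructor
      · rintro ⟨hA, hB, hC⟩ t
        rw [hmemN]
        refine ⟨?_, ?_, ?_⟩
        · intro ht
          have he : t = (⟨i - 1, by omega⟩ : Fin N) := Fin.ext ht
          have : relRank N σ t = 2 := by rw [he]; exact hA
          omega
        · intro h1 h2
          have := hB t h1 h2
          omega
        · intro ht
          have he : t = (⟨k - 1, by omega⟩ : Fin N) := Fin.ext ht
          have : relRank N σ t = 1 ∨ relRank N σ t = 2 := by rw [he]; exact hC
          omega
      · intro h
        have hAt := (hmemN σ ⟨i - 1, by omega⟩).mp (h _)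
        have hCt := (hmemN σ ⟨k - 1, by omega⟩).mp (h _)
        have hposA := DurationAux.relRank_pos N σ ⟨i - 1, by omega⟩
        have hposC := DurationAux.relRank_pos N σ ⟨k - 1, by omega⟩
        refine ⟨?_, ?_, ?_⟩
        · have := hAt.1 rfl
          omega
        · intro m h1 h2
          have := ((hmemN σ m).mp (h m)).2.1 h1 h2
          have := DurationAux.relRank_pos N σ m
          omega
        · have := hCt.2.2 rfl
          omega
    have hPden : ∀ σ : Equiv.Perm (Fin N),
        (relRank N σ ⟨i - 1, by omega⟩ = 2) ↔ ∀ t, DurationAux.code N σ t ∈ Sden t := by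
      intro σ
      constructor
      · intro hA t
        rw [hmemD]
        intro ht
        have he : t = (⟨i - 1, by omega⟩ : Fin N) := Fin.ext ht
        have : relRank N σ t = 2 := by rw [he]; exact hA
        omega
      · intro h
        have hAt := (hmemD σ ⟨i - 1, by omega⟩).mp (h _)
        have hposA := DurationAux.relRank_pos N σ ⟨i - 1, by omega⟩
        have := hAt rfl
        omega
    have hnum := DurationAux.card_code N Snum _ hPnum
    have hden := DurationAux.card_code N Sden _ hPden
    have hcardN : ∀ t : Fin N, (Snum t).card = DurationAux.Ffun i k t.val := by
      intro t
      rw [hSnum]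
      rw [DurationAux.card_filter_fin (t.val + 1) (DurationAux.numPred i k t.val)]
      exact DurationAux.card_num i k hi2' hik t.val
    have hcardD : ∀ t : Fin N, (Sden t).card = DurationAux.Gfun i t.val := by
      intro t
      rw [hSden]
      rw [DurationAux.card_filter_fin (t.val + 1) (DurationAux.denPred i t.val)]
      exact DurationAux.card_den i hi2' t.val
    rw [Finset.prod_congr rfl (fun t _ => hcardN t)] at hnum
    rw [Finset.prod_congr rfl (fun t _ => hcardD t)] at hden
    rw [Fin.prod_univ_eq_prod_range (fun t => DurationAux.Ffun i k t) N] at hnum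
    rw [Fin.prod_univ_eq_prod_range (fun t => DurationAux.Gfun i t) N] at hden
    rw [hnum, hden]
    set A := ∏ t ∈ Finset.range N, DurationAux.Ffun i k t with hA
    set B := ∏ t ∈ Finset.range N, DurationAux.Gfun i t with hB
    have hBpos : 0 < B := by
      rw [hB]
      apply Finset.prod_pos
      intro t _
      unfold DurationAux.Gfun
      split <;> omega
    have hident := DurationAux.prod_main N i k hi2' hik hk
    rw [← hA, ← hB] at hident
    have hBne : (B : ℝ) ≠ 0 := Nat.cast_ne_zero.mpr (by omega)
    have hkR : (3 : ℝ) ≤ (k : ℝ) := by exact_mod_cast hk3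
    have hDne : ((k : ℝ) - 2) * ((k : ℝ) - 1) * k ≠ 0 := by
      apply ne_of_gt
      have h1 : (0:ℝ) < (k : ℝ) - 2 := by linarith
      have h2 : (0:ℝ) < (k : ℝ) - 1 := by linarith
      have h3 : (0:ℝ) < (k : ℝ) := by linarith
      positivity
    rw [div_eq_div_iff hBne hDne]
    have hcast := congrArg (Nat.cast : ℕ → ℝ) hident
    push_cast [Nat.cast_sub (show 2 ≤ k by omega), Nat.cast_sub (show 1 ≤ k by omega),
      Nat.cast_sub (show 1 ≤ i by omega)] at hcast
    linear_combination hcast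
end

section
/- For integers 1 ≤ i ≤ N with N ≥ 2, ∑_{s=i+1}^{N} (i/((s-1)s)) · (1 - ∑_{k=s+1}^{N} 2(s-1)s/((k-2)(k-1)k)) = i(N-i)/(N(N-1)). -/
open Finset

lemma inner_sum_eval (s : ℕ) (hs : 2 ≤ s) :
    ∀ N, s ≤ N →
      ∑ k ∈ Finset.Icc (s + 1) N, 2 * ((s : ℝ) - 1) * s / (((k : ℝ) - 2) * ((k : ℝ) - 1) * k)
        = 1 - ((s : ℝ) - 1) * s / (((N : ℝ) - 1) * N) := by
  intro N hN
  induction N, hN using Nat.le_induction with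
  | base =>
    rw [Finset.Icc_eq_empty (by omega), Finset.sum_empty]
    have hs' : (2 : ℝ) ≤ (s : ℝ) := by exact_mod_cast hs
    have h1 : ((s : ℝ) - 1) ≠ 0 := by nlinarith
    have h2 : (s : ℝ) ≠ 0 := by nlinarith
    field_simp
    norm_num
  | succ n hn ih =>
    rw [Finset.sum_Icc_succ_top (by omega), ih]
    have hs' : (2 : ℝ) ≤ (s : ℝ) := by exact_mod_cast hs
    have hn' : (s : ℝ) ≤ (n : ℝ) := by exact_mod_cast hn
    have h1 : ((n : ℝ) - 1) ≠ 0 := by nlinarith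
    have h2 : (n : ℝ) ≠ 0 := by nlinarith
    have h3 : ((n : ℝ) + 1) ≠ 0 := by nlinarith
    have h4 : ((n : ℝ) + 1 - 2) ≠ 0 := by nlinarith
    have h5 : ((n : ℝ) + 1 - 1) ≠ 0 := by nlinarith
    push_cast
    field_simp
    ring

/-- For `1 ≤ i ≤ N`, `N ≥ 2`,
`∑_{s=i+1}^{N} (i/((s-1)s))·(1 - ∑_{k=s+1}^{N} 2(s-1)s/((k-2)(k-1)k)) = i(N-i)/(N(N-1))`. -/
theorem duration_best_then_second (i N : ℕ) (h1 : 1 ≤ i) (h2 : i ≤ N) (h3 : 2 ≤ N) :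
    ∑ s ∈ Finset.Icc (i + 1) N,
        ((i : ℝ) / (((s : ℝ) - 1) * s)) *
          (1 - ∑ k ∈ Finset.Icc (s + 1) N,
            2 * ((s : ℝ) - 1) * s / (((k : ℝ) - 2) * ((k : ℝ) - 1) * k))
      = (i : ℝ) * ((N : ℝ) - i) / ((N : ℝ) * ((N : ℝ) - 1)) := by
  have hN2 : (2 : ℝ) ≤ (N : ℝ) := by exact_mod_cast h3
  have hN0 : (N : ℝ) ≠ 0 := by nlinarith
  have hN1 : ((N : ℝ) - 1) ≠ 0 := by nlinarith
  have key : ∀ s ∈ Finset.Icc (i + 1) N,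
      ((i : ℝ) / (((s : ℝ) - 1) * s)) *
          (1 - ∑ k ∈ Finset.Icc (s + 1) N,
            2 * ((s : ℝ) - 1) * s / (((k : ℝ) - 2) * ((k : ℝ) - 1) * k))
        = (i : ℝ) / (((N : ℝ) - 1) * N) := by
    intro s hsmem
    rw [Finset.mem_Icc] at hsmem
    have hs2 : 2 ≤ s := by omega
    rw [inner_sum_eval s hs2 N hsmem.2]
    have hs' : (2 : ℝ) ≤ (s : ℝ) := by exact_mod_cast hs2
    have hs1 : ((s : ℝ) - 1) ≠ 0 := by nlinarith
    have hs0 : (s : ℝ) ≠ 0 := by nlinarith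
    field_simp
    ring
  rw [Finset.sum_congr rfl key, Finset.sum_const, Nat.card_Icc]
  have hc : N + 1 - (i + 1) = N - i := by omega
  rw [hc, nsmul_eq_mul, Nat.cast_sub h2]
  field_simp
end

section
/- The equation μ² e^{2/μ} = e³ has a unique real solution μ* with μ* > 1, and μ* ∈ (3.31, 3.32). -/
open Real Finset

private lemma f_hasDeriv (x : ℝ) (hx : x ≠ 0) :
    HasDerivAt (fun x : ℝ => x ^ 2 * Real.exp (2 / x))
      (2 * (x - 1) * Real.exp (2 / x)) x := by
  have h1 : HasDerivAt (fun x : ℝ => 2 / x) (2 * -(x ^ 2)⁻¹) x := by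
    simpa [div_eq_mul_inv] using (hasDerivAt_inv hx).const_mul (2 : ℝ)
  have h3 : HasDerivAt (fun x : ℝ => x ^ 2 * Real.exp (2 / x))
      (((2 : ℕ) : ℝ) * x ^ (2 - 1) * Real.exp (2 / x)
        + x ^ 2 * (Real.exp (2 / x) * (2 * -(x ^ 2)⁻¹))) x :=
    (hasDerivAt_pow 2 x).mul h1.exp
  convert h3 using 1
  field_simp
  ring

private lemma f_cont : ContinuousOn (fun x : ℝ => x ^ 2 * Real.exp (2 / x)) (Set.Ici 1) := by
  apply (continuousOn_pow 2).mul
  apply Real.continuous_exp.comp_continuousOn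
  exact continuousOn_const.div continuousOn_id
    (fun x hx => ne_of_gt (lt_of_lt_of_le one_pos hx))

private lemma f_mono : StrictMonoOn (fun x : ℝ => x ^ 2 * Real.exp (2 / x)) (Set.Ici 1) := by
  apply strictMonoOn_of_deriv_pos (convex_Ici 1) f_cont
  intro x hx
  rw [interior_Ici] at hx
  have hx1 : (1 : ℝ) < x := hx
  rw [(f_hasDeriv x (by linarith)).deriv]
  have : 0 < Real.exp (2 / x) := Real.exp_pos _
  nlinarith

private lemma exp3_eq : Real.exp 3 = Real.exp 1 ^ 3 := by
  rw [← Real.exp_nat_mul]; norm_num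

private lemma num1 : (3.31 : ℝ) ^ 2 * Real.exp (2 / 3.31) < Real.exp 3 := by
  have hx : |(2 : ℝ) / 3.31| ≤ 1 := by rw [abs_of_nonneg (by norm_num)]; norm_num
  have hb := Real.exp_bound hx (n := 5) (by norm_num)
  have h1 : Real.exp (2 / 3.31) ≤
      (∑ m ∈ Finset.range 5, ((2 : ℝ) / 3.31) ^ m / m.factorial)
        + |(2 : ℝ) / 3.31| ^ 5 * ((5 : ℕ).succ / ((5 : ℕ).factorial * 5)) := by
    have := (abs_le.mp hb).2
    linarith
  have h2 : (∑ m ∈ Finset.range 5, ((2 : ℝ) / 3.31) ^ m / m.factorial)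
        + |(2 : ℝ) / 3.31| ^ 5 * ((5 : ℕ).succ / ((5 : ℕ).factorial * 5))
      < 2.7182818283 ^ 3 / 3.31 ^ 2 := by
    simp only [Finset.sum_range_succ, Finset.sum_range_zero, Nat.factorial]
    rw [abs_of_nonneg (by norm_num)]
    norm_num
  have h3 : (2.7182818283 : ℝ) ^ 3 < Real.exp 1 ^ 3 :=
    pow_lt_pow_left₀ Real.exp_one_gt_d9 (by norm_num) (by norm_num)
  rw [exp3_eq]
  nlinarith [Real.exp_pos (2 / 3.31 : ℝ)]

private lemma num2 : Real.exp 3 < (3.32 : ℝ) ^ 2 * Real.exp (2 / 3.32) := by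
  have h1 : (∑ m ∈ Finset.range 6, ((2 : ℝ) / 3.32) ^ m / m.factorial)
      ≤ Real.exp (2 / 3.32) := Real.sum_le_exp_of_nonneg (by norm_num) 6
  have h2 : (2.7182818286 : ℝ) ^ 3 / 3.32 ^ 2
      < ∑ m ∈ Finset.range 6, ((2 : ℝ) / 3.32) ^ m / m.factorial := by
    simp only [Finset.sum_range_succ, Finset.sum_range_zero, Nat.factorial]
    norm_num
  have h3 : Real.exp 1 ^ 3 < (2.7182818286 : ℝ) ^ 3 :=
    pow_lt_pow_left₀ Real.exp_one_lt_d9 (Real.exp_pos 1).le (by norm_num)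
  rw [exp3_eq]
  nlinarith

/-- The equation `μ² e^{2/μ} = e³` has a unique real solution
`μ* > 1`, and `μ* ∈ (3.31, 3.32)`. -/
theorem mu_star_unique :
    ∃ μ : ℝ, (1 < μ ∧ μ ^ 2 * Real.exp (2 / μ) = Real.exp 3) ∧
      (∀ μ' : ℝ, 1 < μ' → μ' ^ 2 * Real.exp (2 / μ') = Real.exp 3 → μ' = μ) ∧
      3.31 < μ ∧ μ < 3.32 := by
  set f : ℝ → ℝ := fun x => x ^ 2 * Real.exp (2 / x) with hf
  have hsub : Set.Icc (3.31 : ℝ) 3.32 ⊆ Set.Ici 1 := fun x hx => le_trans (by norm_num) hx.1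
  have hiv := intermediate_value_Icc (by norm_num : (3.31 : ℝ) ≤ 3.32) (f_cont.mono hsub)
  have hmem : Real.exp 3 ∈ Set.Icc (f 3.31) (f 3.32) := ⟨num1.le, num2.le⟩
  obtain ⟨μ, hμIcc, hμeq⟩ := hiv hmem
  have hlt1 : (3.31 : ℝ) < μ := by
    rcases lt_or_eq_of_le hμIcc.1 with h | h
    · exact h
    · exact absurd (h ▸ hμeq) num1.ne
  have hlt2 : μ < 3.32 := by
    rcases lt_or_eq_of_le hμIcc.2 with h | h
    · exact h
    · exact absurd (h ▸ hμeq) num2.ne'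
  have hμ1 : (1 : ℝ) < μ := by linarith
  refine ⟨μ, ⟨hμ1, hμeq⟩, ?_, hlt1, hlt2⟩
  intro μ' hμ'1 hμ'eq
  have hμeq' : μ ^ 2 * Real.exp (2 / μ) = Real.exp 3 := hμeq
  exact f_mono.injOn (Set.mem_Ici.mpr hμ'1.le) (Set.mem_Ici.mpr hμ1.le)
    (hμ'eq.trans hμeq'.symm)
end

section
/- For integers 1 ≤ k < N, the difference φ(k+1,1) − φ(k,1) is decreasing in k, where φ(k,1) = (k/N²)(1 + k − N + 2N ∑_{j=k}^{N-1} 1/j). -/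
open Finset

/-- The expected proportional duration of stopping at time `k` on a relatively
best object: `φ(k,1) = (k/N²)(1 + k − N + 2N ∑_{j=k}^{N-1} 1/j)`. -/
noncomputable def phiBest (N k : ℕ) : ℝ :=
  ((k : ℝ) / (N : ℝ) ^ 2) *
    (1 + (k : ℝ) - (N : ℝ) + 2 * (N : ℝ) * ∑ j ∈ Finset.Ico k N, (1 : ℝ) / (j : ℝ))

lemma phiBest_aux (n c t : ℝ) (hc : 0 < c) (hn : c + 1 < n) :
    ((c + 2) / n ^ 2) * (1 + (c + 2) - n + 2 * n * t)
      - ((c + 1) / n ^ 2) * (1 + (c + 1) - n + 2 * n * (1 / (c + 1) + t))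
    < ((c + 1) / n ^ 2) * (1 + (c + 1) - n + 2 * n * (1 / (c + 1) + t))
      - (c / n ^ 2) * (1 + c - n + 2 * n * (1 / c + (1 / (c + 1) + t))) := by
  have hn0 : 0 < n := by linarith
  have hc1 : 0 < c + 1 := by linarith
  have hEq : (((c + 1) / n ^ 2) * (1 + (c + 1) - n + 2 * n * (1 / (c + 1) + t))
      - (c / n ^ 2) * (1 + c - n + 2 * n * (1 / c + (1 / (c + 1) + t))))
      - (((c + 2) / n ^ 2) * (1 + (c + 2) - n + 2 * n * t)
      - ((c + 1) / n ^ 2) * (1 + (c + 1) - n + 2 * n * (1 / (c + 1) + t)))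
      = 2 / ((c + 1) * n) - 2 / n ^ 2 := by
    field_simp
    ring
  have hlt : 2 / n ^ 2 < 2 / ((c + 1) * n) := by
    rw [div_lt_div_iff₀ (by positivity) (by positivity)]
    nlinarith
  linarith

/-- For `1 ≤ k < N` the difference `φ(k+1,1) − φ(k,1)` is
decreasing in `k`. -/
theorem phiBest_difference_decreasing (N k : ℕ) (h1 : 1 ≤ k) (h2 : k + 1 < N) :
    phiBest N (k + 2) - phiBest N (k + 1) < phiBest N (k + 1) - phiBest N k := by
  have hkN : k < N := by omega
  have e1 : ∑ j ∈ Finset.Ico k N, (1 : ℝ) / (j : ℝ)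
      = 1 / (k : ℝ) + ∑ j ∈ Finset.Ico (k + 1) N, (1 : ℝ) / (j : ℝ) :=
    Finset.sum_eq_sum_Ico_succ_bot hkN _
  have e2 : ∑ j ∈ Finset.Ico (k + 1) N, (1 : ℝ) / (j : ℝ)
      = 1 / ((k : ℝ) + 1) + ∑ j ∈ Finset.Ico (k + 2) N, (1 : ℝ) / (j : ℝ) := by
    have := Finset.sum_eq_sum_Ico_succ_bot h2 (fun j => (1 : ℝ) / (j : ℝ))
    simpa using this
  have hkpos : (0 : ℝ) < (k : ℝ) := by exact_mod_cast h1
  have hkN' : (k : ℝ) + 1 < (N : ℝ) := by exact_mod_cast h2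
  simp only [phiBest]
  rw [e1, e2]
  push_cast
  linarith [phiBest_aux (N : ℝ) (k : ℝ) (∑ j ∈ Finset.Ico (k + 2) N, (1 : ℝ) / (j : ℝ))
    hkpos hkN']
end
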